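/- Let w ∈ L¹(𝕋) be non-negative and let ν be a finite positive Borel measure on 𝕋, singular with respect to m, satisfying ν(core(w)) = 0. Then there exists a sequence (f_n)_{n≥1} of bounded non-negative Borel functions on 𝕋 such that: (i) the measures f_n dm converge weak-star to ν, i.e. for every continuous g : 𝕋 → ℂ, ∫_𝕋 g·f_n dm → ∫_𝕋 g dν; (ii) ∫_𝕋 f_n dm = ν(𝕋) for every n; and (iii) for every n and m-a.e. x ∈ 𝕋 with w(x) > 0, f_n(x) ≤ log⁺(1/w(x)). -/

import Mathlib

open MeasureTheory Set Filter Metric Complex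
open scoped Real ENNReal Topology

noncomputable section

/-- Normalized arc-length measure on the unit circle (so that m(𝕋) = 1). -/
def mT : Measure ℂ :=
  Measure.map (fun θ : ℝ => Complex.exp (θ * Complex.I))
    ((ENNReal.ofReal (2 * Real.pi))⁻¹ • volume.restrict (Set.Ioc 0 (2 * Real.pi)))

/-- The unit circle 𝕋 as a subset of ℂ. -/
def unitCircle : Set ℂ := Metric.sphere (0:ℂ) 1

/-- Open arc of the unit circle. -/
def openArc (a b : ℝ) : Set ℂ := (fun θ : ℝ => Complex.exp (θ * Complex.I)) '' Set.Ioo a b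

/-- core(w): the union of all open arcs on which log w is m-integrable. -/
def coreSet (w : ℂ → ℝ) : Set ℂ :=
  ⋃ (a : ℝ) (b : ℝ) (_ : MeasureTheory.IntegrableOn (fun x => Real.log (w x)) (openArc a b) mT),
    openArc a b

-- abbreviations
def eC (θ : ℝ) : ℂ := Complex.exp (θ * Complex.I)

def μ₀ : Measure ℝ := (ENNReal.ofReal (2 * Real.pi))⁻¹ • volume.restrict (Set.Ioc 0 (2 * Real.pi))

lemma mT_eq : mT = Measure.map eC μ₀ := rfl

lemma continuous_eC : Continuous eC := by
  exact Complex.continuous_exp.comp ((Complex.continuous_ofReal).mul continuous_const)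

lemma measurable_eC : Measurable eC := continuous_eC.measurable

lemma abs_eC (θ : ℝ) : ‖eC θ‖ = 1 := by
  simp [eC, Complex.norm_exp]

lemma eC_mem_sphere (θ : ℝ) : eC θ ∈ unitCircle := by
  simp [unitCircle, mem_sphere_iff_norm, abs_eC]

lemma eC_eq_iff {u v : ℝ} : eC u = eC v ↔ ∃ m : ℤ, u = v + 2 * Real.pi * m := by
  rw [eC, eC, Complex.exp_eq_exp_iff_exists_int]
  constructor
  · rintro ⟨m, h⟩
    refine ⟨m, ?_⟩
    have h2 : (u : ℂ) = v + 2 * Real.pi * m := by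
      have hI : (Complex.I : ℂ) ≠ 0 := Complex.I_ne_zero
      apply mul_right_cancel₀ hI
      push_cast
      linear_combination h
    exact_mod_cast congrArg Complex.re h2
  · rintro ⟨m, h⟩
    refine ⟨m, ?_⟩
    rw [h]
    push_cast
    ring

lemma eC_injOn {a b : ℝ} (hab : b - a ≤ 2 * Real.pi) : InjOn eC (Set.Ioo a b) := by
  intro u hu v hv huv
  rcases eC_eq_iff.mp huv with ⟨m, hm⟩
  have hpi := Real.pi_pos
  have h1 : |u - v| < 2 * Real.pi := by
    rw [abs_sub_lt_iff]
    constructor <;> nlinarith [hu.1, hu.2, hv.1, hv.2]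
  have hm0 : m = 0 := by
    by_contra hm0
    have : (1:ℝ) ≤ |(m:ℝ)| := by
      have : 1 ≤ |m| := Int.one_le_abs hm0
      exact_mod_cast (by exact_mod_cast this : (1:ℝ) ≤ (|m| : ℝ))
    have : 2 * Real.pi ≤ |u - v| := by
      rw [hm]
      have : |2 * Real.pi * m| = 2 * Real.pi * |(m:ℝ)| := by
        rw [abs_mul]; rw [abs_of_pos (by positivity)]
      simp only [add_sub_cancel_left]
      rw [this]
      nlinarith
    linarith
  rw [hm, hm0] ; push_cast ; ring

lemma eC_injOn_Ioc {a b : ℝ} (hab : b - a ≤ 2 * Real.pi) : InjOn eC (Set.Ioc a b) := by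
  intro u hu v hv huv
  rcases eC_eq_iff.mp huv with ⟨m, hm⟩
  have hpi := Real.pi_pos
  have h1 : |u - v| < 2 * Real.pi := by
    rw [abs_sub_lt_iff]
    constructor <;> nlinarith [hu.1, hu.2, hv.1, hv.2]
  have hm0 : m = 0 := by
    by_contra hm0
    have h2 : (1:ℝ) ≤ |(m:ℝ)| := by
      have : 1 ≤ |m| := Int.one_le_abs hm0
      exact_mod_cast (by exact_mod_cast this : (1:ℝ) ≤ (|m| : ℝ))
    have : 2 * Real.pi ≤ |u - v| := by
      rw [hm]
      have h3 : |2 * Real.pi * m| = 2 * Real.pi * |(m:ℝ)| := by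
        rw [abs_mul]; rw [abs_of_pos (by positivity)]
      simp only [add_sub_cancel_left]
      rw [h3]
      nlinarith
    linarith
  rw [hm, hm0] ; push_cast ; ring

lemma measurableSet_image_eC {s : Set ℝ} (hs : MeasurableSet s) (hsub : ∃ a b, b - a ≤ 2 * Real.pi ∧ s ⊆ Set.Ioo a b) :
    MeasurableSet (eC '' s) := by
  rcases hsub with ⟨a, b, hab, hsub⟩
  exact hs.image_of_continuousOn_injOn continuous_eC.continuousOn ((eC_injOn hab).mono hsub)

lemma measurableSet_image_eC_Ioc {a b : ℝ} (hab : b - a ≤ 2 * Real.pi) :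
    MeasurableSet (eC '' Set.Ioc a b) :=
  measurableSet_Ioc.image_of_continuousOn_injOn continuous_eC.continuousOn (eC_injOn_Ioc hab)

instance : IsProbabilityMeasure mT := by
  constructor
  rw [mT_eq, Measure.map_apply measurable_eC MeasurableSet.univ]
  have hpi := Real.two_pi_pos
  simp only [Set.preimage_univ, μ₀, Measure.smul_apply, Measure.restrict_apply MeasurableSet.univ,
    Set.univ_inter, Real.volume_Ioc, sub_zero, smul_eq_mul]
  refine ENNReal.inv_mul_cancel ?_ ENNReal.ofReal_ne_top
  simp only [ne_eq, ENNReal.ofReal_eq_zero, not_le]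
  linarith

lemma measurableSet_unitCircle : MeasurableSet unitCircle :=
  Metric.isClosed_sphere.measurableSet

lemma mT_compl_sphere : mT unitCircleᶜ = 0 := by
  rw [mT_eq, Measure.map_apply measurable_eC (measurableSet_unitCircle.compl)]
  have : eC ⁻¹' unitCircleᶜ = ∅ := by
    ext θ; simp [eC_mem_sphere θ]
  simp [this]

lemma mT_ae_sphere : ∀ᵐ z ∂mT, z ∈ unitCircle := by
  rw [ae_iff]
  have : {z : ℂ | ¬ z ∈ unitCircle} = unitCircleᶜ := rfl
  rw [this]; exact mT_compl_sphere

lemma mT_singleton (z : ℂ) : mT {z} = 0 := by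
  rw [mT_eq, Measure.map_apply measurable_eC (measurableSet_singleton z)]
  have hc : (eC ⁻¹' {z}).Countable := by
    by_cases h : ∃ θ₀, eC θ₀ = z
    · rcases h with ⟨θ₀, hθ₀⟩
      have : eC ⁻¹' {z} ⊆ Set.range (fun m : ℤ => θ₀ + 2 * Real.pi * m) := by
        intro u hu
        simp only [Set.mem_preimage, Set.mem_singleton_iff] at hu
        rcases eC_eq_iff.mp (hu.trans hθ₀.symm) with ⟨m, hm⟩
        exact ⟨m, hm.symm⟩
      exact (Set.countable_range _).mono this
    · have : eC ⁻¹' {z} = ∅ := by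
        ext u; simp only [Set.mem_preimage, Set.mem_singleton_iff, Set.mem_empty_iff_false, iff_false]
        exact fun hu => h ⟨u, hu⟩
      simp [this]
  have h0 : volume (eC ⁻¹' {z}) = 0 := hc.measure_zero _
  simp only [μ₀, Measure.smul_apply, Measure.restrict_apply (measurable_eC (measurableSet_singleton z))]
  have : volume (eC ⁻¹' {z} ∩ Set.Ioc 0 (2*Real.pi)) = 0 :=
    le_antisymm (h0 ▸ measure_mono (Set.inter_subset_left)) zero_le
  simp [this]

lemma eC_surjOn : unitCircle ⊆ eC '' Set.Ioc 0 (2 * Real.pi) := by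
  intro z hz
  have hz1 : ‖z‖ = 1 := by
    simpa [unitCircle, mem_sphere_iff_norm] using hz
  have harg := Complex.norm_mul_exp_arg_mul_I z
  rw [hz1] at harg
  norm_num at harg
  have hbounds := Complex.arg_mem_Ioc z
  by_cases h : 0 < Complex.arg z
  · exact ⟨Complex.arg z, ⟨h, le_trans hbounds.2 (by linarith [Real.pi_pos])⟩, harg⟩
  · refine ⟨Complex.arg z + 2 * Real.pi, ⟨by push_neg at h; linarith [hbounds.1], by push_neg at h; linarith [Real.pi_pos]⟩, ?_⟩
    have : eC (Complex.arg z + 2 * Real.pi) = eC (Complex.arg z) := by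
      apply eC_eq_iff.mpr ⟨1, by push_cast; ring⟩
    rw [this]; exact harg

lemma image_eC_Ioc_eq : eC '' Set.Ioc 0 (2 * Real.pi) = unitCircle := by
  apply Set.Subset.antisymm
  · rintro z ⟨θ, _, rfl⟩; exact eC_mem_sphere θ
  · exact eC_surjOn

lemma piece (G : ℂ → ℝ) (hGm : Measurable G) (hG0 : ∀ z, 0 ≤ G z)
    (S : Set ℂ) (hS : MeasurableSet S)
    (htop : ∫⁻ z in S, ENNReal.ofReal (G z) ∂mT = ⊤)
    (c : ℝ≥0∞) (hc : c ≠ ⊤) :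
    ∃ h : ℂ → ℝ, Measurable h ∧ (∀ z, 0 ≤ h z) ∧ (∃ M : ℝ, ∀ z, h z ≤ M) ∧
      (∀ z, h z ≤ G z) ∧ (∀ z, z ∉ S → h z = 0) ∧ Integrable h mT ∧
      ∫ z, h z ∂mT = c.toReal := by
  by_cases hc0 : c = 0
  · exact ⟨0, measurable_const, fun z => le_rfl, ⟨0, fun z => le_rfl⟩,
      fun z => hG0 z, fun z _ => rfl, integrable_const 0, by simp [hc0]⟩
  have hmeas : ∀ M : ℕ, Measurable (fun z => ENNReal.ofReal (min (M:ℝ) (G z))) :=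
    fun M => (measurable_const.min hGm).ennreal_ofReal
  have hmono : Monotone (fun M : ℕ => fun z => ENNReal.ofReal (min (M:ℝ) (G z))) := by
    intro M M' hMM' z
    exact ENNReal.ofReal_le_ofReal (min_le_min (by exact_mod_cast hMM') le_rfl)
  have hsup : (⨆ M : ℕ, ∫⁻ z in S, ENNReal.ofReal (min (M:ℝ) (G z)) ∂mT) = ⊤ := by
    rw [← MeasureTheory.lintegral_iSup hmeas hmono]
    have hptw : ∀ z, (⨆ M : ℕ, ENNReal.ofReal (min (M:ℝ) (G z))) = ENNReal.ofReal (G z) := by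
      intro z
      apply le_antisymm
      · exact iSup_le fun M => ENNReal.ofReal_le_ofReal (min_le_right _ _)
      · have hM : min ((⌈G z⌉₊ : ℝ)) (G z) = G z := min_eq_right (Nat.le_ceil _)
        calc ENNReal.ofReal (G z) = ENNReal.ofReal (min ((⌈G z⌉₊:ℝ)) (G z)) := by rw [hM]
          _ ≤ ⨆ M : ℕ, ENNReal.ofReal (min (M:ℝ) (G z)) :=
            le_iSup (fun M : ℕ => ENNReal.ofReal (min (M:ℝ) (G z))) (⌈G z⌉₊)
    calc ∫⁻ z in S, ⨆ M : ℕ, ENNReal.ofReal (min (M:ℝ) (G z)) ∂mT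
        = ∫⁻ z in S, ENNReal.ofReal (G z) ∂mT := by
          apply lintegral_congr
          intro z; exact hptw z
      _ = ⊤ := htop
  have hbig : ∃ M : ℕ, ENNReal.ofReal c.toReal ≤ ∫⁻ z in S, ENNReal.ofReal (min (M:ℝ) (G z)) ∂mT := by
    have : ENNReal.ofReal c.toReal < ⊤ := ENNReal.ofReal_lt_top
    rw [← hsup] at this
    exact (lt_iSup_iff.mp this).imp fun M hM => hM.le
  obtain ⟨M, hM⟩ := hbig
  set q : ℂ → ℝ := fun z => Set.indicator S (fun z => min (M:ℝ) (G z)) z with hq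
  have hqmeas : Measurable q := (measurable_const.min hGm).indicator hS
  have hq0 : ∀ z, 0 ≤ q z := by
    intro z
    apply Set.indicator_nonneg
    intro z _; exact le_min (by positivity) (hG0 z)
  have hqle : ∀ z, q z ≤ min (M:ℝ) (G z) := by
    intro z
    by_cases hz : z ∈ S
    · rw [hq]; simp [Set.indicator_of_mem hz]
    · rw [hq]; simp only [Set.indicator_of_notMem hz]
      exact le_min (by positivity) (hG0 z)
  have hqbdd : ∀ z, q z ≤ (M:ℝ) := fun z => (hqle z).trans (min_le_left _ _)
  have hqInt : Integrable q mT := by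
    apply Integrable.mono' (integrable_const (M:ℝ)) hqmeas.aestronglyMeasurable
    filter_upwards with z
    rw [Real.norm_of_nonneg (hq0 z)]
    exact hqbdd z
  have hIval : ∫ z, q z ∂mT = (∫⁻ z in S, ENNReal.ofReal (min (M:ℝ) (G z)) ∂mT).toReal := by
    rw [hq]
    rw [MeasureTheory.integral_indicator hS]
    rw [MeasureTheory.integral_eq_lintegral_of_nonneg_ae]
    · filter_upwards with z
      exact le_min (by positivity) (hG0 z)
    · exact (measurable_const.min hGm).aestronglyMeasurable
  have hfin : ∫⁻ z in S, ENNReal.ofReal (min (M:ℝ) (G z)) ∂mT ≠ ⊤ := by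
    have hb : ∫⁻ z in S, ENNReal.ofReal (min (M:ℝ) (G z)) ∂mT ≤ ∫⁻ _ in S, ENNReal.ofReal (M:ℝ) ∂mT := by
      apply lintegral_mono
      intro z; exact ENNReal.ofReal_le_ofReal (min_le_left _ _)
    rw [MeasureTheory.lintegral_const] at hb
    exact (hb.trans_lt (by
      apply ENNReal.mul_lt_top ENNReal.ofReal_lt_top
      exact (measure_lt_top _ _))).ne
  have hIge : c.toReal ≤ ∫ z, q z ∂mT := by
    rw [hIval]
    have := ENNReal.toReal_mono hfin hM
    rwa [ENNReal.toReal_ofReal ENNReal.toReal_nonneg] at this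
  have hIpos : 0 < ∫ z, q z ∂mT := by
    have : 0 < c.toReal := ENNReal.toReal_pos hc0 hc
    linarith
  set t : ℝ := c.toReal / ∫ z, q z ∂mT with ht
  have ht0 : 0 ≤ t := div_nonneg ENNReal.toReal_nonneg hIpos.le
  have ht1 : t ≤ 1 := (div_le_one hIpos).mpr hIge
  refine ⟨fun z => t * q z, hqmeas.const_mul t, fun z => mul_nonneg ht0 (hq0 z),
    ⟨(M:ℝ), fun z => ?_⟩, fun z => ?_, fun z hz => ?_, hqInt.const_mul t, ?_⟩
  · calc t * q z ≤ 1 * q z := mul_le_mul_of_nonneg_right ht1 (hq0 z)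
      _ = q z := one_mul _
      _ ≤ (M:ℝ) := hqbdd z
  · calc t * q z ≤ 1 * q z := mul_le_mul_of_nonneg_right ht1 (hq0 z)
      _ = q z := one_mul _
      _ ≤ G z := (hqle z).trans (min_le_right _ _)
  · rw [hq]; simp [Set.indicator_of_notMem hz]
  · rw [integral_const_mul, ht]
    field_simp

lemma openArc_eq (a b : ℝ) : openArc a b = eC '' Set.Ioo a b := rfl

lemma hside_gen (w : ℂ → ℝ) (G : ℂ → ℝ) (hGm : Measurable G) (hG0 : ∀ z, 0 ≤ G z)
    (hGtop : ∀ A : Set ℂ, MeasurableSet A →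
      ¬ MeasureTheory.IntegrableOn (fun x => Real.log (w x)) A mT →
      ∫⁻ z in A, ENNReal.ofReal (G z) ∂mT = ⊤)
    (θ : ℝ) (hθ : eC θ ∉ coreSet w) (δ : ℝ) (hδ : 0 < δ) (hδτ : δ ≤ 2 * Real.pi) :
    ∃ K : Set ℝ, K ⊆ Set.Ioo (θ - δ) (θ + δ) ∧ MeasurableSet (eC '' K) ∧
      ∫⁻ z in eC '' K, ENNReal.ofReal (G z) ∂mT = ⊤ := by
  have hcore_bad : ∀ a b : ℝ, eC θ ∈ openArc a b →
      ¬ MeasureTheory.IntegrableOn (fun x => Real.log (w x)) (openArc a b) mT := by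
    intro a b hxab hint
    exact hθ (Set.mem_iUnion.mpr ⟨a, Set.mem_iUnion.mpr ⟨b, Set.mem_iUnion.mpr ⟨hint, hxab⟩⟩⟩)
  set KL := Set.Ioo (θ - δ/2) θ with hKL
  set KR := Set.Ioo θ (θ + δ/2) with hKR
  have hKLm : MeasurableSet (eC '' KL) :=
    measurableSet_image_eC measurableSet_Ioo ⟨θ - δ/2, θ, by linarith, subset_rfl⟩
  have hKRm : MeasurableSet (eC '' KR) :=
    measurableSet_image_eC measurableSet_Ioo ⟨θ, θ + δ/2, by linarith, subset_rfl⟩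
  have hfullm : MeasurableSet (eC '' Set.Ioo (θ - δ/2) (θ + δ/2)) :=
    measurableSet_image_eC measurableSet_Ioo ⟨θ - δ/2, θ + δ/2, by linarith, subset_rfl⟩
  have hful : ∫⁻ z in eC '' Set.Ioo (θ - δ/2) (θ + δ/2), ENNReal.ofReal (G z) ∂mT = ⊤ := by
    apply hGtop _ hfullm
    rw [← openArc_eq]
    exact hcore_bad _ _ ⟨θ, ⟨by linarith, by linarith⟩, rfl⟩
  have hsplit : eC '' Set.Ioo (θ - δ/2) (θ + δ/2) ⊆ (eC '' KL ∪ eC '' KR) ∪ {eC θ} := by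
    rintro z ⟨v, hv, rfl⟩
    rcases lt_trichotomy v θ with h | h | h
    · exact Or.inl (Or.inl ⟨v, ⟨hv.1, h⟩, rfl⟩)
    · exact Or.inr (by simp [h])
    · exact Or.inl (Or.inr ⟨v, ⟨h, hv.2⟩, rfl⟩)
  have hmono := lintegral_mono_set (μ := mT) (f := fun z => ENNReal.ofReal (G z)) hsplit
  rw [hful] at hmono
  have hle1 := lintegral_union_le (μ := mT) (fun z => ENNReal.ofReal (G z)) (eC '' KL ∪ eC '' KR) ({eC θ})
  have hle2 := lintegral_union_le (μ := mT) (fun z => ENNReal.ofReal (G z)) (eC '' KL) (eC '' KR)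
  have hpt : ∫⁻ z in ({eC θ} : Set ℂ), ENNReal.ofReal (G z) ∂mT = 0 :=
    setLIntegral_measure_zero _ _ (mT_singleton _)
  have htop2 : (∫⁻ z in eC '' KL, ENNReal.ofReal (G z) ∂mT) +
      (∫⁻ z in eC '' KR, ENNReal.ofReal (G z) ∂mT) = ⊤ := by
    have : (⊤:ℝ≥0∞) ≤ (∫⁻ z in eC '' KL, ENNReal.ofReal (G z) ∂mT) +
        (∫⁻ z in eC '' KR, ENNReal.ofReal (G z) ∂mT) := by
      calc (⊤:ℝ≥0∞) ≤ ∫⁻ z in (eC '' KL ∪ eC '' KR) ∪ {eC θ}, ENNReal.ofReal (G z) ∂mT := hmono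
        _ ≤ (∫⁻ z in eC '' KL ∪ eC '' KR, ENNReal.ofReal (G z) ∂mT) + 0 := by
            rw [← hpt]; exact hle1
        _ ≤ _ := by rw [add_zero]; exact hle2
    exact top_le_iff.mp this
  rcases ENNReal.add_eq_top.mp htop2 with h | h
  · refine ⟨KL, ?_, hKLm, h⟩
    rw [hKL]; rintro v ⟨h1, h2⟩; exact ⟨by linarith, by linarith⟩
  · refine ⟨KR, ?_, hKRm, h⟩
    rw [hKR]; rintro v ⟨h1, h2⟩; exact ⟨by linarith, by linarith⟩


set_option maxHeartbeats 1000000 in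
/-- **Weak-star approximation with obstacles.** If ν is a finite positive singular
measure on 𝕋 with ν(core(w)) = 0, there is a sequence of bounded non-negative
functions fₙ with fₙ dm → ν weak-star, ∫ fₙ dm = ν(𝕋), and fₙ ≤ log⁺(1/w) where w > 0. -/
theorem weak_star_approximation_with_obstacle
    (w : ℂ → ℝ) (hw0 : ∀ x, 0 ≤ w x) (hwInt : Integrable w mT)
    (ν : Measure ℂ) [IsFiniteMeasure ν] (hνcirc : ν unitCircleᶜ = 0)
    (hνsing : ν.MutuallySingular mT)
    (hνcore : ν (coreSet w) = 0) :
    ∃ f : ℕ → ℂ → ℝ,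
      (∀ n, Measurable (f n)) ∧
      (∀ n x, 0 ≤ f n x) ∧
      (∀ n, ∃ C, ∀ x, f n x ≤ C) ∧
      -- (i) weak-star convergence of fₙ dm to ν
      (∀ g : ℂ → ℂ, Continuous g →
        Tendsto (fun n => ∫ x, g x * (f n x : ℂ) ∂mT) atTop (𝓝 (∫ x, g x ∂ν))) ∧
      -- (ii) total masses agree
      (∀ n, ∫ x, f n x ∂mT = (ν Set.univ).toReal) ∧
      -- (iii) the obstacle bound
      (∀ n, ∀ᵐ x ∂mT, 0 < w x → f n x ≤ max 0 (Real.log (1 / w x))) := by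
  classical
  have hτpos : 0 < 2 * Real.pi := Real.two_pi_pos
  set τ : ℝ := 2 * Real.pi with hτdef
  -- trivial case
  by_cases hν0 : ν Set.univ = 0
  · have hν0' : ν = 0 := by
      ext s hs
      exact le_antisymm (le_trans (measure_mono (Set.subset_univ s)) hν0.le) zero_le
    refine ⟨fun _ _ => 0, fun n => measurable_const, fun n x => le_rfl,
      fun n => ⟨0, fun x => le_rfl⟩, ?_, ?_, ?_⟩
    · intro g hg
      simp only [Complex.ofReal_zero, mul_zero, integral_zero, hν0', integral_zero_measure]
      exact tendsto_const_nhds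
    · intro n; simp [hν0]
    · intro n; filter_upwards with x _; exact le_max_left _ _
  -- measurable nonneg representative of w
  set w' : ℂ → ℝ := hwInt.1.mk w with hw'def
  have hw'm : Measurable w' := hwInt.1.stronglyMeasurable_mk.measurable
  set w2 : ℂ → ℝ := fun z => max (w' z) 0 with hw2def
  have hw2m : Measurable w2 := hw'm.max measurable_const
  have hw2nonneg : ∀ z, 0 ≤ w2 z := fun z => le_max_right _ _
  have hw2ae : w2 =ᵐ[mT] w := by
    filter_upwards [hwInt.1.ae_eq_mk] with z hz
    show max (w' z) 0 = w z
    rw [hw'def, ← hz, max_eq_left (hw0 z)]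
  have hw2Int : Integrable w2 mT := hwInt.congr hw2ae.symm
  -- obstacle function
  set G : ℂ → ℝ := fun z => if 0 < w2 z then max 0 (Real.log (1 / w2 z)) else 0 with hGdef
  have hGm : Measurable G := by
    apply Measurable.ite (measurableSet_lt measurable_const hw2m)
    · apply Measurable.max measurable_const
      apply Real.measurable_log.comp
      exact measurable_const.div hw2m
    · exact measurable_const
  have hG0 : ∀ z, 0 ≤ G z := by
    intro z
    rw [hGdef]
    by_cases h : 0 < w2 z
    · simp only [if_pos h]; exact le_max_left _ _
    · simp only [if_neg h]; exact le_rfl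
  -- pointwise identity log w2 = max 0 (log w2) - G
  have hlogid : ∀ z, Real.log (w2 z) = max 0 (Real.log (w2 z)) - G z := by
    intro z
    rw [hGdef]
    by_cases h : 0 < w2 z
    · simp only [if_pos h, one_div, Real.log_inv]
      rcases le_or_gt 0 (Real.log (w2 z)) with h' | h'
      · rw [max_eq_right h', max_eq_left (by linarith)]; ring
      · rw [max_eq_left h'.le, max_eq_right (by linarith)]; ring
    · have hz0 : w2 z = 0 := le_antisymm (not_lt.mp h) (hw2nonneg z)
      simp [if_neg h, hz0, Real.log_zero]
  have hmaxInt : Integrable (fun z => max 0 (Real.log (w2 z))) mT := by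
    apply Integrable.mono' hw2Int
      ((measurable_const.max (Real.measurable_log.comp hw2m)).aestronglyMeasurable)
    filter_upwards with z
    rw [Real.norm_of_nonneg (le_max_left _ _)]
    rcases eq_or_lt_of_le (hw2nonneg z) with h | h
    · simp only [Function.comp]
      rw [← h, Real.log_zero]
      simp
    · simp only [Function.comp]
      have := Real.log_le_sub_one_of_pos h
      apply max_le <;> linarith
  -- not integrable on A ⇒ lintegral of G is top
  have hGtop : ∀ A : Set ℂ, MeasurableSet A →
      ¬ IntegrableOn (fun x => Real.log (w x)) A mT →
      ∫⁻ z in A, ENNReal.ofReal (G z) ∂mT = ⊤ := by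
    intro A hA hnint
    by_contra hne
    apply hnint
    have hGint : IntegrableOn G A mT := by
      refine ⟨hGm.aestronglyMeasurable.restrict, ?_⟩
      rw [hasFiniteIntegral_iff_norm]
      have heq : ∫⁻ z in A, ENNReal.ofReal ‖G z‖ ∂mT = ∫⁻ z in A, ENNReal.ofReal (G z) ∂mT :=
        lintegral_congr fun z => by rw [Real.norm_of_nonneg (hG0 z)]
      rw [heq]
      exact lt_top_iff_ne_top.mpr hne
    have hmaxOn : IntegrableOn (fun z => max 0 (Real.log (w2 z))) A mT := hmaxInt.integrableOn
    have h2 : IntegrableOn (fun z => Real.log (w2 z)) A mT := by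
      have := hmaxOn.sub hGint
      apply this.congr
      apply Filter.EventuallyEq.of_eq
      funext z
      exact (hlogid z).symm
    apply h2.congr
    apply ae_restrict_of_ae
    filter_upwards [hw2ae] with z hz
    rw [hz]
  -- LEVEL construction
  have hlevel : ∀ n : ℕ, ∃ fn : ℂ → ℝ, Measurable fn ∧ (∀ z, 0 ≤ fn z) ∧ (∃ C, ∀ z, fn z ≤ C) ∧
      (∀ z, fn z ≤ G z) ∧ (∫ z, fn z ∂mT = (ν Set.univ).toReal) ∧
      (∀ g : ℂ → ℂ, Continuous g → ∀ ε : ℝ, 0 < ε →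
        (∀ u v : ℝ, |u| ≤ 2*τ → |v| ≤ 2*τ → |u - v| ≤ τ / 2^n → ‖g (eC u) - g (eC v)‖ ≤ ε) →
        ‖(∫ z, g z * (fn z : ℂ) ∂mT) - ∫ z, g z ∂ν‖ ≤ 2 * ε * (ν Set.univ).toReal) := by
    intro n
    set N : ℕ := 2^n with hNdef
    have hN0 : 0 < N := pow_pos two_pos n
    have hNR : (0:ℝ) < N := by exact_mod_cast hN0
    have hNR1 : (1:ℝ) ≤ N := by exact_mod_cast hN0
    set a : ℕ → ℝ := fun j => τ * j / N with hadef
    have ha0 : a 0 = 0 := by simp [hadef]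
    have haN : a N = τ := by simp only [hadef]; field_simp [hNR.ne']
    have hamono : ∀ {j k : ℕ}, j ≤ k → a j ≤ a k := by
      intro j k hjk
      simp only [hadef]
      have hc : (j:ℝ) ≤ k := Nat.cast_le.mpr hjk
      apply div_le_div_of_nonneg_right ?_ hNR.le
      nlinarith
    have hstep : ∀ j : ℕ, a (j+1) - a j = τ / N := by
      intro j; simp only [hadef]; push_cast; field_simp; ring
    have halt : ∀ j : ℕ, a j < a (j+1) := by
      intro j
      have h1 := hstep j
      have h2 : 0 < τ/N := by positivity
      linarith
    have hrange : ∀ j, j < N → Set.Ioc (a j) (a (j+1)) ⊆ Set.Ioc 0 τ := by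
      intro j hj v hv
      have h1 : 0 ≤ a j := by simp only [hadef]; positivity
      have h2 : a (j+1) ≤ a N := hamono (by omega)
      rw [haN] at h2
      exact ⟨lt_of_le_of_lt h1 hv.1, hv.2.trans h2⟩
    set J : ℕ → Set ℂ := fun j => eC '' Set.Ioc (a j) (a (j+1)) with hJdef
    have hτNle : τ / N ≤ τ := div_le_self hτpos.le hNR1
    have hJm : ∀ j, MeasurableSet (J j) := by
      intro j
      apply measurableSet_image_eC_Ioc
      rw [hstep j]
      exact hτNle
    have hIocInj : Set.InjOn eC (Set.Ioc 0 τ) := eC_injOn_Ioc (by simp [hτdef])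
    have hJdisj : ∀ j ∈ Finset.range N, ∀ k ∈ Finset.range N, j ≠ k → Disjoint (J j) (J k) := by
      intro j hj k hk hjk
      rw [Set.disjoint_left]
      rintro z ⟨u, hu, rfl⟩ ⟨v, hv, hvz⟩
      have huv : v = u := hIocInj (hrange k (Finset.mem_range.mp hk) hv)
        (hrange j (Finset.mem_range.mp hj) hu) hvz
      rw [huv] at hv
      rcases Nat.lt_or_ge j k with h | h
      · have h3 : a (j+1) ≤ a k := hamono h
        linarith [hu.2, hv.1]
      · have hkj : k < j := lt_of_le_of_ne h (Ne.symm hjk)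
        have h3 : a (k+1) ≤ a j := hamono hkj
        linarith [hu.1, hv.2]
    have hIocUnion : (⋃ j ∈ Finset.range N, Set.Ioc (a j) (a (j+1))) = Set.Ioc 0 τ := by
      have key : ∀ k : ℕ, (⋃ j ∈ Finset.range k, Set.Ioc (a j) (a (j+1))) = Set.Ioc (a 0) (a k) := by
        intro k
        induction k with
        | zero => simp
        | succ k ih =>
          rw [Finset.range_add_one, Finset.set_biUnion_insert, ih, Set.union_comm]
          exact Set.Ioc_union_Ioc_eq_Ioc (hamono (Nat.zero_le k)) (halt k).le
      rw [key N, ha0, haN]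
    have hJUnion : (⋃ j ∈ Finset.range N, J j) = unitCircle := by
      simp only [hJdef]
      rw [← Set.image_iUnion₂, hIocUnion]
      exact image_eC_Ioc_eq
    set c : ℕ → ℝ≥0∞ := fun j => ν (J j) with hcdef
    have hcsum : (∑ j ∈ Finset.range N, c j) = ν Set.univ := by
      rw [← measure_biUnion_finset ?_ (fun j _ => hJm j)]
      · rw [hJUnion]
        have hcompl := measure_add_measure_compl (μ := ν) measurableSet_unitCircle
        rw [hνcirc, add_zero] at hcompl
        exact hcompl
      · intro j hj k hk hjk
        exact hJdisj j (Finset.mem_coe.mp hj) k (Finset.mem_coe.mp hk) hjk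
    set S : Finset ℕ := (Finset.range N).filter (fun j => c j ≠ 0) with hSdef
    have hSsub : S ⊆ Finset.range N := Finset.filter_subset _ _
    have hpick : ∀ j : ℕ, ∃ θj : ℝ, j ∈ S → (θj ∈ Set.Ioc (a j) (a (j+1)) ∧ eC θj ∉ coreSet w) := by
      intro j
      by_cases hj : j ∈ S
      · have hcj : c j ≠ 0 := (Finset.mem_filter.mp hj).2
        have hsub : J j ⊆ (J j \ coreSet w) ∪ coreSet w := by
          intro z hz
          by_cases hzc : z ∈ coreSet w
          · exact Or.inr hzc
          · exact Or.inl ⟨hz, hzc⟩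
        have hνJ : ν (J j \ coreSet w) ≠ 0 := by
          intro h0
          apply hcj
          have h1 : ν (J j) ≤ ν (J j \ coreSet w) + ν (coreSet w) :=
            le_trans (measure_mono hsub) (measure_union_le _ _)
          rw [h0, hνcore, add_zero] at h1
          exact le_antisymm h1 zero_le
        obtain ⟨x, hxJ, hxc⟩ := nonempty_of_measure_ne_zero hνJ
        obtain ⟨θj, hθj, hθx⟩ := hxJ
        exact ⟨θj, fun _ => ⟨hθj, by rw [hθx]; exact hxc⟩⟩
      · exact ⟨0, fun h => absurd h hj⟩
    choose θ hθ using hpick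
    have hθmem : ∀ j ∈ S, θ j ∈ Set.Ioc (a j) (a (j+1)) := fun j hj => (hθ j hj).1
    have hθIoc : ∀ j ∈ S, θ j ∈ Set.Ioc 0 τ := fun j hj =>
      hrange j (Finset.mem_range.mp (hSsub hj)) (hθmem j hj)
    have hθne : ∀ j ∈ S, ∀ k ∈ S, j ≠ k → θ j ≠ θ k := by
      intro j hj k hk hjk heq
      have h1 := hθmem j hj
      have h2 := hθmem k hk
      rw [heq] at h1
      rcases Nat.lt_or_ge j k with h | h
      · have h3 : a (j+1) ≤ a k := hamono h
        linarith [h1.2, h2.1]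
      · have hkj : k < j := lt_of_le_of_ne h (Ne.symm hjk)
        have h3 : a (k+1) ≤ a j := hamono hkj
        linarith [h1.1, h2.2]
    set P : Finset (ℕ × ℕ) := (S ×ˢ S).filter (fun p => p.1 ≠ p.2) with hPdef
    set dfun : ℕ × ℕ → ℝ := fun p => min |θ p.1 - θ p.2| (τ - |θ p.1 - θ p.2|) with hdfun
    set D : ℝ := if hP : P.Nonempty then P.inf' hP dfun else 1 with hDdef
    have habs : ∀ j ∈ S, ∀ k ∈ S, j ≠ k → (0 < |θ j - θ k| ∧ |θ j - θ k| < τ) := by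
      intro j hj k hk hjk
      have h1 := hθIoc j hj
      have h2 := hθIoc k hk
      constructor
      · rw [abs_pos, sub_ne_zero]
        exact hθne j hj k hk hjk
      · rw [abs_sub_lt_iff]
        constructor <;> linarith [h1.1, h1.2, h2.1, h2.2]
    have hDpos : 0 < D := by
      rw [hDdef]
      split_ifs with hP
      · rw [Finset.lt_inf'_iff]
        rintro ⟨j, k⟩ hp
        obtain ⟨hmemP, hne⟩ := Finset.mem_filter.mp hp
        obtain ⟨hjS, hkS⟩ := Finset.mem_product.mp hmemP
        obtain ⟨hp1, hp2⟩ := habs j hjS k hkS hne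
        exact lt_min hp1 (by simp only [hdfun]; linarith)
      · exact one_pos
    have hDle : ∀ j ∈ S, ∀ k ∈ S, j ≠ k → D ≤ min |θ j - θ k| (τ - |θ j - θ k|) := by
      intro j hj k hk hjk
      have hmem : (j,k) ∈ P := Finset.mem_filter.mpr ⟨Finset.mem_product.mpr ⟨hj, hk⟩, hjk⟩
      rw [hDdef, dif_pos ⟨(j,k), hmem⟩]
      exact Finset.inf'_le dfun hmem
    set δ : ℝ := min (τ / (2*N)) (D/3) with hδdef
    have hδpos : 0 < δ := lt_min (by positivity) (by linarith)
    have hδτ2N : δ ≤ τ/(2*N) := min_le_left _ _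
    have hδD : δ ≤ D/3 := min_le_right _ _
    have hτ2Nτ : τ/(2*N) ≤ τ/2 := by gcongr <;> linarith
    have hδτ : δ ≤ τ := by linarith
    have h2δτ : 2*δ ≤ τ := by linarith
    have hδn : δ ≤ τ / 2^n := by
      have h1 : τ/(2*N) ≤ τ/N := by gcongr <;> linarith
      have h2 : τ/(N:ℝ) = τ/2^n := by
        rw [hNdef]; push_cast; ring
      linarith
    set B : ℕ → Set ℂ := fun j => eC '' Set.Ioo (θ j - δ) (θ j + δ) with hBdef
    have hBdisj : ∀ j ∈ S, ∀ k ∈ S, j ≠ k → Disjoint (B j) (B k) := by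
      intro j hj k hk hjk
      rw [Set.disjoint_left]
      rintro z ⟨u, hu, rfl⟩ ⟨v, hv, hvz⟩
      obtain ⟨m, hm⟩ := eC_eq_iff.mp hvz
      have hkey : |θ j - θ k + τ * m| < 2*δ := by
        have h1 : |u - θ j| < δ := by rw [abs_lt]; constructor <;> linarith [hu.1, hu.2]
        have h2 : |v - θ k| < δ := by rw [abs_lt]; constructor <;> linarith [hv.1, hv.2]
        have h3 : θ j - θ k + τ*m = (v - θ k) - (u - θ j) := by rw [hm]; ring
        rw [h3]
        calc |(v - θ k) - (u - θ j)| ≤ |v - θ k| + |u - θ j| := abs_sub _ _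
          _ < 2*δ := by linarith
      obtain ⟨ha1, ha2⟩ := habs j hj k hk hjk
      have hD1 := hDle j hj k hk hjk
      have hDa : D ≤ |θ j - θ k| := hD1.trans (min_le_left _ _)
      have hDb : D ≤ τ - |θ j - θ k| := hD1.trans (min_le_right _ _)
      have h2δD : 2*δ < D := by linarith
      rcases eq_or_ne m 0 with rfl | hm0
      · have : |θ j - θ k| < 2*δ := by
          have := hkey
          push_cast at this
          simpa using this
        linarith
      rcases eq_or_ne m 1 with rfl | hm1
      · have h3 : |τ| ≤ |θ j - θ k + τ*((1:ℤ):ℝ)| + |θ j - θ k| := by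
          calc |τ| = |(θ j - θ k + τ*((1:ℤ):ℝ)) - (θ j - θ k)| := by push_cast; ring_nf
            _ ≤ |θ j - θ k + τ*((1:ℤ):ℝ)| + |θ j - θ k| := abs_sub _ _
        rw [abs_of_pos hτpos] at h3
        linarith
      rcases eq_or_ne m (-1) with rfl | hm2
      · have h3 : |τ| ≤ |θ j - θ k + τ*((-1:ℤ):ℝ)| + |θ j - θ k| := by
          calc |τ| = |(θ j - θ k) - (θ j - θ k + τ*((-1:ℤ):ℝ))| := by push_cast; ring_nf
            _ ≤ |θ j - θ k| + |θ j - θ k + τ*((-1:ℤ):ℝ)| := abs_sub _ _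
            _ = _ := by ring
        rw [abs_of_pos hτpos] at h3
        linarith
      · have hm2' : (2:ℝ) ≤ |(m:ℝ)| := by
          have hint : (2:ℤ) ≤ |m| := by
            rcases abs_cases m with ⟨h2, h3⟩ | ⟨h2, h3⟩ <;> rw [h2] <;> omega
          calc (2:ℝ) = ((2:ℤ):ℝ) := by norm_num
            _ ≤ ((|m|:ℤ):ℝ) := by exact_mod_cast hint
            _ = |(m:ℝ)| := by push_cast; ring
        have h3 : 2*τ ≤ |τ * m| := by
          rw [abs_mul, abs_of_pos hτpos]
          nlinarith
        have h4 : |τ*m| ≤ |θ j - θ k + τ*m| + |θ j - θ k| := by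
          calc |τ*(m:ℝ)| = |(θ j - θ k + τ*m) - (θ j - θ k)| := by ring_nf
            _ ≤ |θ j - θ k + τ*m| + |θ j - θ k| := abs_sub _ _
        linarith
    -- pieces
    have hpieces : ∀ j : ℕ, ∃ h : ℂ → ℝ, Measurable h ∧ (∀ z, 0 ≤ h z) ∧ (∃ M : ℝ, ∀ z, h z ≤ M) ∧
        (∀ z, h z ≤ G z) ∧ (∀ z, z ∉ B j → h z = 0) ∧ Integrable h mT ∧
        (j ∈ S → ∫ z, h z ∂mT = (c j).toReal) ∧ (j ∉ S → ∀ z, h z = 0) := by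
      intro j
      by_cases hj : j ∈ S
      · obtain ⟨K, hKsub, hKm, hKtop⟩ := hside_gen w G hGm hG0 hGtop (θ j) (hθ j hj).2 δ hδpos hδτ
        obtain ⟨h, h1, h2, h3, h4, h5, h6, h7⟩ :=
          piece G hGm hG0 (eC '' K) hKm hKtop (c j) (measure_ne_top ν _)
        refine ⟨h, h1, h2, h3, h4, ?_, h6, fun _ => h7, fun hj' => absurd hj hj'⟩
        intro z hz
        apply h5
        intro hzK
        exact hz (Set.image_mono hKsub hzK)
      · exact ⟨0, measurable_const, fun z => le_rfl, ⟨0, fun z => le_rfl⟩, fun z => hG0 z,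
          fun z _ => rfl, integrable_const 0, fun hj' => absurd hj' hj, fun _ z => rfl⟩
    choose h hmz h0z hbddz hlez houtz hIntz hmassz hzeroz using hpieces
    choose M hM using hbddz
    set fn : ℂ → ℝ := fun z => ∑ j ∈ S, h j z with hfndef
    have hfnm : Measurable fn := by
      apply Finset.measurable_sum
      intro j _
      exact hmz j
    have hfn0 : ∀ z, 0 ≤ fn z := fun z => Finset.sum_nonneg fun j _ => h0z j z
    have hfnbdd : ∃ C, ∀ z, fn z ≤ C := by
      refine ⟨∑ j ∈ S, M j, fun z => ?_⟩
      exact Finset.sum_le_sum fun j _ => hM j z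
    have hfnG : ∀ z, fn z ≤ G z := by
      intro z
      by_cases hz : ∃ j ∈ S, z ∈ B j
      · obtain ⟨j₀, hj₀S, hj₀B⟩ := hz
        rw [hfndef]
        simp only
        rw [Finset.sum_eq_single_of_mem j₀ hj₀S (fun k hk hkne => houtz k z
          (Set.disjoint_left.mp (hBdisj j₀ hj₀S k hk (fun e => hkne e.symm)) hj₀B))]
        exact hlez j₀ z
      · push_neg at hz
        rw [hfndef]
        simp only
        rw [Finset.sum_eq_zero fun k hk => houtz k z (hz k hk)]
        exact hG0 z
    have hcfin : ∀ j, c j ≠ ⊤ := fun j => measure_ne_top ν _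
    have hsumtoReal : (∑ j ∈ Finset.range N, (c j).toReal) = (ν Set.univ).toReal := by
      rw [← ENNReal.toReal_sum (fun j _ => hcfin j), hcsum]
    have hmass : ∫ z, fn z ∂mT = (ν Set.univ).toReal := by
      rw [hfndef]
      simp only
      rw [integral_finset_sum S (fun j _ => hIntz j)]
      have h1 : (∑ j ∈ S, ∫ z, h j z ∂mT) = ∑ j ∈ S, (c j).toReal :=
        Finset.sum_congr rfl fun j hj => hmassz j hj
      rw [h1]
      rw [← hsumtoReal]
      apply Finset.sum_subset hSsub
      intro j hjr hjS
      have : c j = 0 := by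
        by_contra hc
        exact hjS (Finset.mem_filter.mpr ⟨hjr, hc⟩)
      rw [this]
      simp
    refine ⟨fn, hfnm, hfn0, hfnbdd, hfnG, hmass, ?_⟩
    -- weak-star estimate
    intro g hg ε hε hmod
    obtain ⟨Cg, hCg⟩ : ∃ Cg : ℝ, ∀ z ∈ unitCircle, ‖g z‖ ≤ Cg :=
      (isCompact_sphere (0:ℂ) 1).exists_bound_of_continuousOn hg.continuousOn
    have hgae : ∀ᵐ z ∂ν, z ∈ unitCircle := by
      rw [ae_iff]
      have he : {z : ℂ | ¬ z ∈ unitCircle} = unitCircleᶜ := rfl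
      rw [he]
      exact hνcirc
    have hgInt : Integrable g ν := by
      apply Integrable.mono' (integrable_const Cg) hg.aestronglyMeasurable
      filter_upwards [hgae] with z hz using hCg z hz
    have hbIoo : ∀ j ∈ S, ∀ v ∈ Set.Ioo (θ j - δ) (θ j + δ),
        |v| ≤ 2*τ ∧ |θ j| ≤ 2*τ ∧ |v - θ j| ≤ τ/2^n := by
      intro j hj v hv
      have h1 := hθIoc j hj
      refine ⟨?_, ?_, ?_⟩
      · rw [abs_le]; constructor <;> [linarith [hv.1, h1.1]; linarith [hv.2, h1.2]]
      · rw [abs_le]; constructor <;> [linarith [h1.1]; linarith [h1.2]]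
      · rw [abs_le]; constructor <;> [linarith [hv.1, hδn]; linarith [hv.2, hδn]]
    have hprodInt : ∀ j ∈ S, Integrable (fun z => g z * (h j z : ℂ)) mT := by
      intro j hj
      apply Integrable.mono' (integrable_const (|Cg| * max (M j) 0))
        (hg.aestronglyMeasurable.mul ((Complex.measurable_ofReal.comp (hmz j)).aestronglyMeasurable))
      filter_upwards [mT_ae_sphere] with z hz
      show ‖g z * ((h j z : ℝ) : ℂ)‖ ≤ |Cg| * max (M j) 0
      rw [norm_mul, Complex.norm_real, Real.norm_of_nonneg (h0z j z)]
      apply mul_le_mul ((hCg z hz).trans (le_abs_self Cg)) ((hM j z).trans (le_max_left _ _))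
        (h0z j z) (abs_nonneg _)
    have hLHS : ∫ z, g z * (fn z : ℂ) ∂mT = ∑ j ∈ S, ∫ z, g z * (h j z : ℂ) ∂mT := by
      rw [← integral_finset_sum S hprodInt]
      congr 1
      funext z
      rw [hfndef]
      push_cast
      rw [Finset.mul_sum]
    have hJsphere : ∀ j, J j ⊆ unitCircle := by
      rintro j z ⟨v, _, rfl⟩
      exact eC_mem_sphere v
    have hRHS : ∫ z, g z ∂ν = ∑ j ∈ Finset.range N, ∫ z in J j, g z ∂ν := by
      have h1 : ∫ z in unitCircle, g z ∂ν + ∫ z in unitCircleᶜ, g z ∂ν = ∫ z, g z ∂ν :=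
        integral_add_compl measurableSet_unitCircle hgInt
      have h2 : ∫ z in unitCircleᶜ, g z ∂ν = 0 := by
        rw [Measure.restrict_eq_zero.mpr hνcirc]
        exact integral_zero_measure g
      have h3 : ∫ z, g z ∂ν = ∫ z in unitCircle, g z ∂ν := by rw [← h1, h2, add_zero]
      rw [h3, ← hJUnion]
      exact integral_biUnion_finset (Finset.range N) (fun j _ => hJm j)
        (fun j hj k hk hjk => hJdisj j (Finset.mem_coe.mp hj) k (Finset.mem_coe.mp hk) hjk)
        (fun j _ => hgInt.integrableOn)
    have hterm : ∀ j ∈ Finset.range N,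
        ‖(∫ z, g z * (h j z : ℂ) ∂mT) - ∫ z in J j, g z ∂ν‖ ≤ 2*ε*(c j).toReal := by
      intro j hjr
      by_cases hj : j ∈ S
      · set x : ℂ := eC (θ j) with hxdef
        have hboundA : ∀ z : ℂ, ‖(g z - g x) * (h j z : ℂ)‖ ≤ ε * h j z := by
          intro z
          by_cases hhz : h j z = 0
          · rw [hhz]; simp
          · have hzB : z ∈ B j := by
              by_contra hzB
              exact hhz (houtz j z hzB)
            obtain ⟨v, hv, rfl⟩ := hzB
            rw [norm_mul, Complex.norm_real, Real.norm_of_nonneg (h0z j _)]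
            obtain ⟨hb1, hb2, hb3⟩ := hbIoo j hj v hv
            exact mul_le_mul_of_nonneg_right (hmod v (θ j) hb1 hb2 hb3) (h0z j _)
        have hIntA : Integrable (fun z => (g z - g x) * (h j z : ℂ)) mT := by
          apply Integrable.mono' ((hIntz j).const_mul ε)
            (((hg.sub continuous_const).aestronglyMeasurable).mul
              ((Complex.measurable_ofReal.comp (hmz j)).aestronglyMeasurable))
          filter_upwards with z
          exact hboundA z
        have hA : ‖∫ z, (g z - g x) * (h j z : ℂ) ∂mT‖ ≤ ε * (c j).toReal := by
          calc ‖∫ z, (g z - g x) * (h j z : ℂ) ∂mT‖ ≤ ∫ z, ε * h j z ∂mT :=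
              norm_integral_le_of_norm_le ((hIntz j).const_mul ε)
                (Filter.Eventually.of_forall hboundA)
            _ = ε * (c j).toReal := by rw [integral_const_mul, hmassz j hj]
        have hIntxh : Integrable (fun z => g x * (h j z : ℂ)) mT :=
          ((hIntz j).ofReal.const_mul (g x))
        have hsplit1 : ∫ z, g z * (h j z : ℂ) ∂mT
            = (∫ z, (g z - g x) * (h j z : ℂ) ∂mT) + g x * ((c j).toReal : ℂ) := by
          have he : (fun z => g z * (h j z : ℂ))
              = fun z => (g z - g x) * (h j z : ℂ) + g x * (h j z : ℂ) := by
            funext z; ring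
          rw [he, integral_add hIntA hIntxh, integral_const_mul]
          congr 1
          have hcast : ∫ z, ((h j z : ℝ) : ℂ) ∂mT = ((∫ z, h j z ∂mT : ℝ) : ℂ) :=
            integral_ofReal
          rw [hcast, hmassz j hj]
        have hIntg2 : IntegrableOn g (J j) ν := hgInt.integrableOn
        have hIntc2 : IntegrableOn (fun _ : ℂ => g x) (J j) ν := (integrableOn_const_iff).mpr
          (Or.inr (measure_lt_top ν _))
        have hsplit2 : ∫ z in J j, g z ∂ν
            = (∫ z in J j, (g z - g x) ∂ν) + g x * ((c j).toReal : ℂ) := by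
          rw [integral_sub hIntg2 hIntc2]
          have hconst : ∫ _ in J j, g x ∂ν = ((ν (J j)).toReal : ℝ) • g x := by
            rw [setIntegral_const, measureReal_def]
          rw [hconst, hcdef]
          simp only [real_smul]
          ring
        have hBbound : ‖∫ z in J j, (g z - g x) ∂ν‖ ≤ ε * (c j).toReal := by
          have hbnd : ∀ᵐ z ∂(ν.restrict (J j)), ‖g z - g x‖ ≤ ε := by
            filter_upwards [ae_restrict_mem (hJm j)] with z hz
            obtain ⟨v, hv, rfl⟩ := hz
            have hmemj : j ∈ Finset.range N := hSsub hj
            have hvIoc : v ∈ Set.Ioc 0 τ := hrange j (Finset.mem_range.mp hmemj) hv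
            have hthIoc := hθIoc j hj
            have hth := hθmem j hj
            apply hmod
            · rw [abs_le]; constructor <;> linarith [hvIoc.1, hvIoc.2]
            · rw [abs_le]; constructor <;> linarith [hthIoc.1, hthIoc.2]
            · have hsteplen := hstep j
              have h2 : τ/(N:ℝ) = τ/2^n := by rw [hNdef]; push_cast; ring
              rw [abs_le]
              constructor
              · have : a j < v := hv.1
                have : θ j ≤ a (j+1) := hth.2
                linarith
              · have : v ≤ a (j+1) := hv.2
                have : a j < θ j := hth.1
                linarith
          calc ‖∫ z in J j, (g z - g x) ∂ν‖ ≤ ∫ _ in J j, ε ∂ν :=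
              norm_integral_le_of_norm_le (integrable_const ε) hbnd
            _ = ε * (c j).toReal := by
              rw [setIntegral_const, measureReal_def, hcdef]
              simp [mul_comm]
        calc ‖(∫ z, g z * (h j z : ℂ) ∂mT) - ∫ z in J j, g z ∂ν‖
            = ‖(∫ z, (g z - g x) * (h j z : ℂ) ∂mT) - ∫ z in J j, (g z - g x) ∂ν‖ := by
              rw [hsplit1, hsplit2]
              congr 1
              ring
          _ ≤ ‖∫ z, (g z - g x) * (h j z : ℂ) ∂mT‖ + ‖∫ z in J j, (g z - g x) ∂ν‖ :=
              norm_sub_le _ _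
          _ ≤ ε * (c j).toReal + ε * (c j).toReal := add_le_add hA hBbound
          _ = 2*ε*(c j).toReal := by ring
      · -- j ∉ S
        have hz := hzeroz j hj
        have hc0 : c j = 0 := by
          by_contra hc
          exact hj (Finset.mem_filter.mpr ⟨hjr, hc⟩)
        have h1 : ∫ z, g z * (h j z : ℂ) ∂mT = 0 := by
          have : (fun z => g z * (h j z : ℂ)) = fun _ => (0:ℂ) := by
            funext z; rw [hz z]; simp
          rw [this, integral_const]
          simp
        have h2 : ∫ z in J j, g z ∂ν = 0 := by
          have hres : ν.restrict (J j) = 0 := Measure.restrict_eq_zero.mpr hc0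
          rw [hres]
          exact integral_zero_measure g
        rw [h1, h2, hc0]
        simp
    -- combine
    have hext : ∑ j ∈ S, ∫ z, g z * (h j z : ℂ) ∂mT
        = ∑ j ∈ Finset.range N, ∫ z, g z * (h j z : ℂ) ∂mT := by
      apply Finset.sum_subset hSsub
      intro j hjr hjS
      have : (fun z => g z * (h j z : ℂ)) = fun _ => (0:ℂ) := by
        funext z; rw [hzeroz j hjS z]; simp
      rw [this, integral_const]
      simp
    rw [hLHS, hext, hRHS, ← Finset.sum_sub_distrib]
    calc ‖∑ j ∈ Finset.range N, ((∫ z, g z * (h j z : ℂ) ∂mT) - ∫ z in J j, g z ∂ν)‖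
        ≤ ∑ j ∈ Finset.range N, ‖(∫ z, g z * (h j z : ℂ) ∂mT) - ∫ z in J j, g z ∂ν‖ :=
          norm_sum_le _ _
      _ ≤ ∑ j ∈ Finset.range N, 2*ε*(c j).toReal := Finset.sum_le_sum hterm
      _ = 2*ε*(ν Set.univ).toReal := by
          rw [← Finset.mul_sum, hsumtoReal]
  -- assemble
  choose f hfm hf0 hfbdd hfG hfmass hfweak using hlevel
  refine ⟨f, hfm, hf0, hfbdd, ?_, hfmass, ?_⟩
  · -- weak-star convergence
    intro g hg
    rw [Metric.tendsto_atTop]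
    intro ε hε
    set V : ℝ := (ν Set.univ).toReal with hVdef
    have hV0 : 0 ≤ V := ENNReal.toReal_nonneg
    set ε' : ℝ := ε / (4 * (V + 1)) with hε'def
    have hε'pos : 0 < ε' := by positivity
    have hucont : UniformContinuousOn (fun p : ℝ => g (eC p)) (Set.Icc (-(2*τ)) (2*τ)) :=
      isCompact_Icc.uniformContinuousOn_of_continuous
        ((hg.comp continuous_eC).continuousOn)
    rw [Metric.uniformContinuousOn_iff] at hucont
    obtain ⟨ρ, hρ, hρ'⟩ := hucont ε' hε'pos
    obtain ⟨n₀, hn₀⟩ : ∃ n₀ : ℕ, τ/ρ < 2^n₀ := pow_unbounded_of_one_lt (τ/ρ) one_lt_two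
    refine ⟨n₀, fun n hn => ?_⟩
    have hmod : ∀ u v : ℝ, |u| ≤ 2*τ → |v| ≤ 2*τ → |u - v| ≤ τ/2^n →
        ‖g (eC u) - g (eC v)‖ ≤ ε' := by
      intro u v hu hv huv
      have hpow : (2:ℝ)^n₀ ≤ 2^n := by
        exact pow_le_pow_right₀ one_le_two hn
      have h1 : τ/2^n ≤ τ/2^n₀ := by
        apply div_le_div_of_nonneg_left hτpos.le (by positivity) hpow
      have h2 : τ/2^n₀ < ρ := by
        rw [div_lt_iff₀ (by positivity)] at hn₀ ⊢
        linarith [hn₀]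
      have hdist : dist u v < ρ := by
        rw [Real.dist_eq]
        linarith
      have := hρ' u (abs_le.mp hu |> fun hh => Set.mem_Icc.mpr ⟨hh.1, hh.2⟩)
        v (abs_le.mp hv |> fun hh => Set.mem_Icc.mpr ⟨hh.1, hh.2⟩) hdist
      rw [dist_eq_norm] at this
      exact this.le
    have hbound := hfweak n g hg ε' hε'pos hmod
    rw [dist_eq_norm]
    have hfin : 2 * ε' * V < ε := by
      rw [hε'def]
      have h1 : 0 < V + 1 := by linarith
      have he : 2 * (ε / (4 * (V + 1))) * V = (2 * ε * V) / (4 * (V + 1)) := by ring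
      rw [he, div_lt_iff₀ (by positivity)]
      nlinarith
    calc ‖(∫ x, g x * ((f n x : ℝ) : ℂ) ∂mT) - ∫ x, g x ∂ν‖ ≤ 2 * ε' * V := hbound
      _ < ε := hfin
  · -- obstacle
    intro n
    filter_upwards [hw2ae] with x hx hwx
    have h1 : f n x ≤ G x := hfG n x
    rw [hGdef] at h1
    simp only at h1
    rw [hx] at h1
    rw [if_pos hwx] at h1
    exact h1
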